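/- arXiv:2004.04407 — 3 statements merged into one kernel-verified Lean document; each statement's English description precedes it below -/
import Mathlib

section
/- If a norm N on a finite-dimensional real vector space E takes integer values on every point of a full-rank lattice Λ ⊆ E, then the dual unit ball B* = {u ∈ E* : ∀ a ∈ E, ⟨u,a⟩ ≤ N(a)} is the convex hull of finitely many linear functionals that take integer values on Λ. -/
open Set

namespace IntNormDual

variable {E : Type*} [AddCommGroup E] [Module ℝ E]

/-- Directional derivative at infinity: `inf_{t ≥ 0} (h (t • a + x) - t * h a)`. -/
noncomputable def derFun (h : E → ℝ) (a : E) (x : E) : ℝ :=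
  sInf ((fun t : ℝ => h (t • a + x) - t * h a) '' Set.Ici 0)

variable {h : E → ℝ} {a : E}

section basic

variable (hsub : ∀ x y : E, h (x + y) ≤ h x + h y)
  (hsmul : ∀ r : ℝ, 0 ≤ r → ∀ x : E, h (r • x) = r * h x)

include hsmul in
lemma h_zero : h 0 = 0 := by
  have := hsmul 0 le_rfl 0
  simpa using this

include hsub hsmul in
lemma h_nonneg_sum (x : E) : 0 ≤ h x + h (-x) := by
  have h1 := hsub x (-x)
  rw [add_neg_cancel, h_zero hsmul] at h1
  linarith

include hsub hsmul in
lemma derFun_lb (x : E) :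
    ∀ y ∈ (fun t : ℝ => h (t • a + x) - t * h a) '' Set.Ici 0, -h (-x) ≤ y := by
  rintro y ⟨t, ht, rfl⟩
  simp only [Set.mem_Ici] at ht
  have h1 : h (t • a) ≤ h (t • a + x) + h (-x) := by
    have := hsub (t • a + x) (-x)
    rwa [add_neg_cancel_right] at this
  rw [hsmul t ht a] at h1
  simp only
  linarith

include hsub hsmul in
lemma derFun_bddBelow (x : E) :
    BddBelow ((fun t : ℝ => h (t • a + x) - t * h a) '' Set.Ici 0) :=
  ⟨-h (-x), derFun_lb hsub hsmul x⟩

lemma derFun_set_nonempty (x : E) :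
    ((fun t : ℝ => h (t • a + x) - t * h a) '' Set.Ici 0).Nonempty :=
  ⟨h (0 • a + x) - 0 * h a, 0, Set.self_mem_Ici, rfl⟩

include hsub hsmul in
lemma derFun_le (t : ℝ) (ht : 0 ≤ t) (x : E) :
    derFun h a x ≤ h (t • a + x) - t * h a :=
  csInf_le (derFun_bddBelow hsub hsmul x) ⟨t, Set.mem_Ici.2 ht, rfl⟩

include hsub hsmul in
lemma derFun_le_self (x : E) : derFun h a x ≤ h x := by
  have := derFun_le (a := a) hsub hsmul 0 le_rfl x
  simpa using this

lemma le_derFun (x : E) (c : ℝ) (hc : ∀ t : ℝ, 0 ≤ t → c ≤ h (t • a + x) - t * h a) :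
    c ≤ derFun h a x :=
  le_csInf (derFun_set_nonempty x) (by rintro y ⟨t, ht, rfl⟩; exact hc t ht)

include hsub hsmul in
lemma derFun_anti (x : E) {t t' : ℝ} (ht : 0 ≤ t) (htt' : t ≤ t') :
    h (t' • a + x) - t' * h a ≤ h (t • a + x) - t * h a := by
  have h1 : h (t' • a + x) ≤ h ((t' - t) • a) + h (t • a + x) := by
    have := hsub ((t' - t) • a) (t • a + x)
    rwa [← add_assoc, ← add_smul, sub_add_cancel] at this
  rw [hsmul _ (by linarith) a] at h1
  have e : (t' - t) * h a = t' * h a - t * h a := by ring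
  linarith

include hsub hsmul in
lemma derFun_add (x y : E) : derFun h a (x + y) ≤ derFun h a x + derFun h a y := by
  have key : ∀ t : ℝ, 0 ≤ t → ∀ s : ℝ, 0 ≤ s →
      derFun h a (x + y) ≤ (h (t • a + x) - t * h a) + (h (s • a + y) - s * h a) := by
    intro t ht s hs
    have h1 : derFun h a (x + y) ≤ h ((t + s) • a + (x + y)) - (t + s) * h a :=
      derFun_le hsub hsmul (t + s) (by linarith) _
    have e : (t + s) • a + (x + y) = (t • a + x) + (s • a + y) := by
      rw [add_smul]; abel
    have h2 : h ((t + s) • a + (x + y)) ≤ h (t • a + x) + h (s • a + y) := by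
      rw [e]; exact hsub _ _
    have e2 : (t + s) * h a = t * h a + s * h a := by ring
    linarith
  have step1 : ∀ s : ℝ, 0 ≤ s →
      derFun h a (x + y) - (h (s • a + y) - s * h a) ≤ derFun h a x := by
    intro s hs
    refine le_derFun x _ fun t ht => ?_
    linarith [key t ht s hs]
  have step2 : derFun h a (x + y) - derFun h a x ≤ derFun h a y := by
    refine le_derFun y _ fun s hs => ?_
    linarith [step1 s hs]
  linarith

include hsub hsmul in
lemma derFun_zero_arg : derFun h a 0 = 0 := by
  refine le_antisymm ?_ ?_
  · have := derFun_le (a := a) hsub hsmul 0 le_rfl (0 : E)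
    simpa [h_zero hsmul] using this
  · refine le_derFun 0 0 fun t ht => ?_
    rw [add_zero, hsmul t ht a]
    simp

include hsub hsmul in
lemma derFun_smul (r : ℝ) (hr : 0 ≤ r) (x : E) :
    derFun h a (r • x) = r * derFun h a x := by
  rcases eq_or_lt_of_le hr with hr0 | hr0
  · rw [← hr0, zero_smul, zero_mul, derFun_zero_arg hsub hsmul]
  refine le_antisymm ?_ ?_
  · have hdiv : derFun h a (r • x) / r ≤ derFun h a x := by
      refine le_derFun x _ fun t ht => ?_
      rw [div_le_iff₀ hr0]
      have h1 : derFun h a (r • x) ≤ h ((r * t) • a + r • x) - (r * t) * h a :=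
        derFun_le hsub hsmul (r * t) (by positivity) _
      have e : (r * t) • a + r • x = r • (t • a + x) := by
        rw [smul_add, smul_smul]
      rw [e, hsmul r hr0.le] at h1
      calc derFun h a (r • x) ≤ r * h (t • a + x) - r * t * h a := h1
        _ = (h (t • a + x) - t * h a) * r := by ring
    calc derFun h a (r • x) = (derFun h a (r • x) / r) * r := by field_simp
      _ ≤ derFun h a x * r := by
          exact mul_le_mul_of_nonneg_right hdiv hr0.le
      _ = r * derFun h a x := by ring
  · refine le_derFun (r • x) _ fun t ht => ?_
    have e : t • a + r • x = r • ((t / r) • a + x) := by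
      rw [smul_add, smul_smul, mul_div_cancel₀ _ hr0.ne']
    rw [e, hsmul r hr0.le]
    have h1 : derFun h a x ≤ h ((t / r) • a + x) - (t / r) * h a :=
      derFun_le hsub hsmul (t / r) (by positivity) x
    have e2 : r * (h ((t / r) • a + x) - t / r * h a) = r * h ((t / r) • a + x) - t * h a := by
      field_simp
    nlinarith [mul_le_mul_of_nonneg_left h1 hr0.le]

include hsub hsmul in
lemma derFun_self : derFun h a a = h a := by
  refine le_antisymm ?_ ?_
  · have := derFun_le (a := a) hsub hsmul 0 le_rfl a
    simpa using this
  · refine le_derFun a _ fun t ht => ?_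
    have e : t • a + a = (t + 1) • a := by rw [add_smul, one_smul]
    rw [e, hsmul (t + 1) (by linarith) a]
    have : (t + 1) * h a - t * h a = h a := by ring
    linarith

include hsub hsmul in
lemma derFun_neg_self : derFun h a (-a) = -h a := by
  refine le_antisymm ?_ ?_
  · have h1 := derFun_le (a := a) hsub hsmul 1 zero_le_one (-a)
    have e : (1 : ℝ) • a + -a = 0 := by rw [one_smul, add_neg_cancel]
    rw [e, h_zero hsmul] at h1
    linarith
  · refine le_derFun (-a) _ fun t ht => ?_
    have e : t • a + -a = (t - 1) • a := by rw [sub_smul, one_smul, sub_eq_add_neg]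
    rw [e]
    rcases le_or_gt 1 t with h1t | h1t
    · rw [hsmul (t - 1) (by linarith) a]
      have : (t - 1) * h a - t * h a = -h a := by ring
      linarith
    · have e2 : (t - 1) • a = (1 - t) • (-a) := by
        rw [smul_neg, ← neg_smul, neg_sub]
      rw [e2, hsmul (1 - t) (by linarith) (-a)]
      nlinarith [h_nonneg_sum hsub hsmul a]

include hsub hsmul in

lemma derFun_int (Λ : Submodule ℤ E) (hZ : ∀ x ∈ Λ, ∃ z : ℤ, h x = z) (ha : a ∈ Λ)
    (x : E) (hx : x ∈ Λ) : ∃ z : ℤ, derFun h a x = z := by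
  obtain ⟨za, hza⟩ := hZ a ha
  have hsk : ∀ k : ℕ, ∃ z : ℤ, h ((k : ℝ) • a + x) - (k : ℝ) * h a = z := by
    intro k
    obtain ⟨z1, hz1⟩ := hZ ((k : ℤ) • a + x) (Λ.add_mem (Λ.smul_mem _ ha) hx)
    refine ⟨z1 - k * za, ?_⟩
    have e : ((k : ℝ)) • a = ((k : ℤ) : ℝ) • a := by norm_num
    rw [e, Int.cast_smul_eq_zsmul, hz1, hza]
    push_cast
    ring
  have hbdd : ∃ B : ℤ, ∀ z : ℤ, (∃ k : ℕ, h ((k : ℝ) • a + x) - (k : ℝ) * h a = (z : ℝ)) → B ≤ z := by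
    refine ⟨⌈-h (-x)⌉, ?_⟩
    rintro z ⟨k, hk⟩
    have hlb : -h (-x) ≤ h ((k : ℝ) • a + x) - (k : ℝ) * h a := by
      simpa using derFun_lb hsub hsmul (a := a) x _ ⟨(k : ℝ), Set.mem_Ici.2 (Nat.cast_nonneg k), rfl⟩
    rw [hk] at hlb
    exact_mod_cast Int.ceil_le.2 hlb
  have hinh : ∃ z : ℤ, ∃ k : ℕ, h ((k : ℝ) • a + x) - (k : ℝ) * h a = (z : ℝ) := by
    obtain ⟨z, hz⟩ := hsk 0
    exact ⟨z, 0, hz⟩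
  obtain ⟨m, ⟨k0, hk0⟩, hmin⟩ := Int.exists_least_of_bdd hbdd hinh
  refine ⟨m, le_antisymm ?_ ?_⟩
  · have := derFun_le (a := a) hsub hsmul (k0 : ℝ) (Nat.cast_nonneg k0) x
    rw [hk0] at this
    exact this
  · refine le_derFun x _ fun t ht => ?_
    obtain ⟨z, hz⟩ := hsk ⌈t⌉₊
    have h1 : (m : ℝ) ≤ (z : ℝ) := by exact_mod_cast hmin z ⟨⌈t⌉₊, hz⟩
    have h2 := derFun_anti (a := a) hsub hsmul x ht (Nat.le_ceil t)
    rw [hz] at h2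
    linarith

end basic

end IntNormDual

namespace IntNormDual

variable {E : Type*} [AddCommGroup E] [Module ℝ E]
variable {h : E → ℝ}

/-- If `h` is sublinear and linear along every basis direction, then `h` is linear. -/
lemma exists_dual_of_all_lin {ι : Type*} [Fintype ι] (bb : Module.Basis ι ℝ E)
    (hsub : ∀ x y : E, h (x + y) ≤ h x + h y)
    (hsmul : ∀ r : ℝ, 0 ≤ r → ∀ x : E, h (r • x) = r * h x)
    (hall : ∀ i, h (bb i) + h (-(bb i)) ≤ 0) :
    ∃ u : Module.Dual ℝ E, ∀ x, u x = h x := by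
  let W : Submodule ℝ E :=
    { carrier := {x | h x + h (-x) ≤ 0}
      add_mem' := by
        intro x y hx hy
        simp only [Set.mem_setOf_eq] at *
        have h1 : h (x + y) ≤ h x + h y := hsub x y
        have h2 : h (-(x + y)) ≤ h (-x) + h (-y) := by
          have := hsub (-x) (-y)
          rwa [← neg_add] at this
        linarith
      zero_mem' := by
        simp only [Set.mem_setOf_eq, neg_zero, h_zero hsmul]
        norm_num
      smul_mem' := by
        intro c x hx
        simp only [Set.mem_setOf_eq] at *
        rcases le_or_gt 0 c with hc | hc
        · rw [hsmul c hc x, ← smul_neg, hsmul c hc (-x)]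
          nlinarith
        · have e1 : h (c • x) = -c * h (-x) := by
            rw [show c • x = (-c) • (-x) by rw [neg_smul, smul_neg, neg_neg],
              hsmul (-c) (by linarith) (-x)]
          have e2 : h (-(c • x)) = -c * h x := by
            rw [show -(c • x) = (-c) • x by rw [neg_smul], hsmul (-c) (by linarith) x]
          rw [e1, e2]
          nlinarith }
  have hW : ∀ x : E, h x + h (-x) = 0 := by
    have htop : (⊤ : Submodule ℝ E) ≤ W := by
      rw [← bb.span_eq, Submodule.span_le]
      rintro _ ⟨i, rfl⟩
      exact hall i
    intro x
    exact le_antisymm (htop Submodule.mem_top) (h_nonneg_sum hsub hsmul x)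
  have haddeq : ∀ x y : E, h (x + y) = h x + h y := by
    intro x y
    refine le_antisymm (hsub x y) ?_
    have h1 : h x ≤ h (x + y) + h (-y) := by
      have := hsub (x + y) (-y)
      rwa [add_neg_cancel_right] at this
    linarith [hW y]
  have hsmuleq : ∀ (r : ℝ) (x : E), h (r • x) = r * h x := by
    intro r x
    rcases le_or_gt 0 r with hr | hr
    · exact hsmul r hr x
    · have e1 : r • x = (-r) • (-x) := by rw [neg_smul, smul_neg, neg_neg]
      rw [e1, hsmul (-r) (by linarith) (-x)]
      have := hW x
      nlinarith
  exact ⟨{ toFun := h, map_add' := haddeq,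
           map_smul' := by intro r x; simpa using hsmuleq r x }, fun x => rfl⟩

/-- Key lemma: a sublinear integer-valued function admits an integral linear minorant. -/
lemma KL {ι : Type*} [Fintype ι] (bb : Module.Basis ι ℝ E) :
    ∀ (n : ℕ) (h : E → ℝ),
      (∀ x y : E, h (x + y) ≤ h x + h y) →
      (∀ r : ℝ, 0 ≤ r → ∀ x : E, h (r • x) = r * h x) →
      (∀ x ∈ Submodule.span ℤ (Set.range ⇑bb), ∃ z : ℤ, h x = z) →
      ∀ s : Finset ι, (∀ i ∉ s, h (bb i) + h (-(bb i)) ≤ 0) → s.card ≤ n →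
      ∃ u : Module.Dual ℝ E, (∀ x, u x ≤ h x) ∧ ∀ i, ∃ z : ℤ, u (bb i) = z := by
  classical
  intro n
  induction n with
  | zero =>
    intro h hsub hsmul hZ s hs hcard
    have hall : ∀ i, h (bb i) + h (-(bb i)) ≤ 0 := by
      intro i
      refine hs i ?_
      have : s = ∅ := Finset.card_eq_zero.mp (Nat.le_zero.mp hcard)
      simp [this]
    obtain ⟨u, hu⟩ := exists_dual_of_all_lin bb hsub hsmul hall
    exact ⟨u, fun x => (hu x).le,
      fun i => by rw [hu]; exact hZ (bb i) (Submodule.subset_span ⟨i, rfl⟩)⟩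
  | succ n IH =>
    intro h hsub hsmul hZ s hs hcard
    by_cases hall : ∀ i, h (bb i) + h (-(bb i)) ≤ 0
    · obtain ⟨u, hu⟩ := exists_dual_of_all_lin bb hsub hsmul hall
      exact ⟨u, fun x => (hu x).le,
        fun i => by rw [hu]; exact hZ (bb i) (Submodule.subset_span ⟨i, rfl⟩)⟩
    · push_neg at hall
      obtain ⟨i, hi⟩ := hall
      have his : i ∈ s := by
        by_contra hns
        exact absurd (hs i hns) (not_le.mpr hi)
      set h1 := derFun h (bb i) with hh1
      have hsub1 : ∀ x y : E, h1 (x + y) ≤ h1 x + h1 y := derFun_add hsub hsmul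
      have hsmul1 : ∀ r : ℝ, 0 ≤ r → ∀ x : E, h1 (r • x) = r * h1 x :=
        fun r hr x => derFun_smul hsub hsmul r hr x
      have hZ1 : ∀ x ∈ Submodule.span ℤ (Set.range ⇑bb), ∃ z : ℤ, h1 x = z :=
        fun x hx => derFun_int hsub hsmul _ hZ
          (Submodule.subset_span ⟨i, rfl⟩) x hx
      obtain ⟨u, hu1, hu2⟩ := IH h1 hsub1 hsmul1 hZ1 (s.erase i)
        (by
          intro j hj
          rcases eq_or_ne j i with rfl | hne
          · rw [hh1, derFun_self hsub hsmul, derFun_neg_self hsub hsmul]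
            linarith
          · have hjs : j ∉ s := fun hjs => hj (Finset.mem_erase.mpr ⟨hne, hjs⟩)
            have := hs j hjs
            have l1 := derFun_le_self hsub hsmul (a := bb i) (bb j)
            have l2 := derFun_le_self hsub hsmul (a := bb i) (-(bb j))
            rw [← hh1] at l1 l2
            linarith)
        (by
          rw [Finset.card_erase_of_mem his]
          omega)
      exact ⟨u, fun x => (hu1 x).trans (derFun_le_self hsub hsmul x), hu2⟩

/-- For each lattice point `x₀`, there is an integral linear functional dominated by `h`
touching it at `x₀`. -/
lemma exists_integral_support {ι : Type*} [Fintype ι] (bb : Module.Basis ι ℝ E) (h : E → ℝ)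
    (hsub : ∀ x y : E, h (x + y) ≤ h x + h y)
    (hsmul : ∀ r : ℝ, 0 ≤ r → ∀ x : E, h (r • x) = r * h x)
    (hZ : ∀ x ∈ Submodule.span ℤ (Set.range ⇑bb), ∃ z : ℤ, h x = z)
    (x₀ : E) (hx₀ : x₀ ∈ Submodule.span ℤ (Set.range ⇑bb)) :
    ∃ u : Module.Dual ℝ E, (∀ x, u x ≤ h x) ∧ (∀ i, ∃ z : ℤ, u (bb i) = z) ∧ u x₀ = h x₀ := by
  set h1 := derFun h x₀ with hh1
  have hsub1 : ∀ x y : E, h1 (x + y) ≤ h1 x + h1 y := derFun_add hsub hsmul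
  have hsmul1 : ∀ r : ℝ, 0 ≤ r → ∀ x : E, h1 (r • x) = r * h1 x :=
    fun r hr x => derFun_smul hsub hsmul r hr x
  have hZ1 : ∀ x ∈ Submodule.span ℤ (Set.range ⇑bb), ∃ z : ℤ, h1 x = z :=
    fun x hx => derFun_int hsub hsmul _ hZ hx₀ x hx
  obtain ⟨u, hu1, hu2⟩ := KL bb (Fintype.card ι) h1 hsub1 hsmul1 hZ1 Finset.univ
    (by intro j hj; exact absurd (Finset.mem_univ j) hj)
    (by simp)
  refine ⟨u, fun x => (hu1 x).trans (derFun_le_self hsub hsmul x), hu2, ?_⟩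
  have e1 : u x₀ ≤ h x₀ := (hu1 x₀).trans_eq (derFun_self hsub hsmul)
  have e2 : u (-x₀) ≤ -h x₀ := (hu1 (-x₀)).trans_eq (derFun_neg_self hsub hsmul)
  rw [map_neg] at e2
  linarith

end IntNormDual

/-- An integer norm on a finite-dimensional real vector space has dual unit ball
equal to the convex hull of finitely many linear functionals taking integer
values on the lattice. -/
theorem integer_norm_dual_ball_is_convex_hull_of_integer_functionals
    {E : Type*} [AddCommGroup E] [Module ℝ E] [FiniteDimensional ℝ E]
    {ι : Type*} [Fintype ι] (b : Module.Basis ι ℝ E)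
    (Λ : Set E) (hΛ : Λ = (Submodule.span ℤ (Set.range b) : Submodule ℤ E))
    (N : E → ℝ)
    (hpos : ∀ a : E, a ≠ 0 → 0 < N a)
    (hhom : ∀ (r : ℝ) (a : E), N (r • a) = |r| * N a)
    (hadd : ∀ a c : E, N (a + c) ≤ N a + N c)
    (hint : ∀ a ∈ Λ, ∃ z : ℤ, N a = z) :
    ∃ F : Finset (Module.Dual ℝ E),
      (∀ u ∈ F, ∀ a ∈ Λ, ∃ z : ℤ, u a = z) ∧
      {u : Module.Dual ℝ E | ∀ a : E, u a ≤ N a} = convexHull ℝ (F : Set (Module.Dual ℝ E)) := by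
  classical
  subst hΛ
  set Λ' : Submodule ℤ E := Submodule.span ℤ (Set.range ⇑b) with hΛ'
  have hN0 : N 0 = 0 := by
    have := hhom 0 0
    simpa using this
  have hNneg : ∀ x : E, N (-x) = N x := by
    intro x
    have := hhom (-1) x
    simpa using this
  have hNnn : ∀ x : E, 0 ≤ N x := by
    intro x
    have h1 := hadd x (-x)
    rw [add_neg_cancel, hN0, hNneg] at h1
    linarith
  have hsmulN : ∀ r : ℝ, 0 ≤ r → ∀ x : E, N (r • x) = r * N x := by
    intro r hr x
    rw [hhom, abs_of_nonneg hr]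
  have hintN : ∀ x ∈ Λ', ∃ z : ℤ, N x = z := fun x hx => hint x hx
  set L : Set (Module.Dual ℝ E) :=
    {u | (∀ x : E, u x ≤ N x) ∧ ∀ i, ∃ z : ℤ, u (b i) = z} with hL
  have habs : ∀ u ∈ L, ∀ i, |u (b i)| ≤ N (b i) := by
    intro u hu i
    rw [abs_le]
    refine ⟨?_, hu.1 _⟩
    have h2 := hu.1 (-(b i))
    rw [map_neg, hNneg] at h2
    linarith
  have hLfin : L.Finite := by
    have hinj : Set.InjOn (fun (u : Module.Dual ℝ E) (i : ι) => u (b i)) L := by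
      intro u _ v _ huv
      exact b.ext fun i => congrFun huv i
    refine Set.Finite.of_finite_image ?_ hinj
    have hbig : (Set.pi Set.univ fun i =>
        (fun z : ℤ => (z : ℝ)) '' Set.Icc (⌈-N (b i)⌉) ⌊N (b i)⌋).Finite :=
      Set.Finite.pi fun i =>
        Set.Finite.image (fun z : ℤ => (z : ℝ)) (Set.finite_Icc (⌈-N (b i)⌉) ⌊N (b i)⌋)
    refine hbig.subset ?_
    rintro _ ⟨u, hu, rfl⟩
    intro i _
    obtain ⟨z, hz⟩ := hu.2 i
    have h1 := habs u hu i
    rw [hz, abs_le] at h1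
    refine ⟨z, Set.mem_Icc.mpr ⟨?_, ?_⟩, hz.symm⟩
    · rw [Int.ceil_le]; exact_mod_cast h1.1
    · rw [Int.le_floor]; exact_mod_cast h1.2
  have h0L : (0 : Module.Dual ℝ E) ∈ L :=
    ⟨fun x => by simpa using hNnn x, fun i => ⟨0, by simp⟩⟩
  set F : Finset (Module.Dual ℝ E) := hLfin.toFinset with hF
  have hFL : ∀ u, u ∈ F ↔ u ∈ L := fun u => hLfin.mem_toFinset
  have hFne : F.Nonempty := ⟨0, (hFL 0).mpr h0L⟩
  have hspanint : ∀ u : Module.Dual ℝ E, (∀ i, ∃ z : ℤ, u (b i) = z) →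
      ∀ x ∈ Λ', ∃ z : ℤ, u x = z := by
    intro u hu x hx
    induction hx using Submodule.span_induction with
    | mem y hy => obtain ⟨i, rfl⟩ := hy; exact hu i
    | zero => exact ⟨0, by simp⟩
    | add y z _ _ hy hz =>
        obtain ⟨z1, h1⟩ := hy
        obtain ⟨z2, h2⟩ := hz
        exact ⟨z1 + z2, by rw [map_add, h1, h2]; push_cast; ring⟩
    | smul n y _ hy =>
        obtain ⟨z1, h1⟩ := hy
        refine ⟨n * z1, ?_⟩
        rw [map_zsmul, h1, zsmul_eq_mul]
        push_cast
        ring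
  refine ⟨F, ?_, ?_⟩
  · intro u huF x hx
    exact hspanint u ((hFL u).mp huF).2 x hx
  refine Set.Subset.antisymm ?_ ?_
  swap
  · refine convexHull_min ?_ ?_
    · intro u huF
      exact ((hFL u).mp ((Set.Finite.mem_toFinset hLfin).mpr ((Set.Finite.mem_toFinset hLfin).mp huF))).1
    · intro u hu v hv p q hp hq hpq
      intro x
      simp only [Set.mem_setOf_eq] at hu hv
      have e : (p • u + q • v) x = p * u x + q * v x := by
        simp [LinearMap.add_apply, LinearMap.smul_apply, smul_eq_mul]
      rw [e]
      calc p * u x + q * v x ≤ p * N x + q * N x := by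
            have := mul_le_mul_of_nonneg_left (hu x) hp
            have := mul_le_mul_of_nonneg_left (hv x) hq
            linarith
        _ = N x := by rw [← add_mul, hpq, one_mul]
  · intro w hw
    by_contra hwn
    simp only [Set.mem_setOf_eq] at hw
    set φ : Module.Dual ℝ E ≃ₗ[ℝ] (ι → ℝ) := b.dualBasis.equivFun with hφdef
    have hφ : ∀ (u : Module.Dual ℝ E) (i : ι), φ u i = u (b i) := fun u i =>
      b.dualBasis_equivFun u i
    have himg : ⇑φ '' (convexHull ℝ (F : Set (Module.Dual ℝ E)))
        = convexHull ℝ (⇑φ '' (F : Set (Module.Dual ℝ E))) := by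
      simpa using φ.toLinearMap.image_convexHull (F : Set (Module.Dual ℝ E))
    have hwnot : φ w ∉ convexHull ℝ (⇑φ '' (F : Set (Module.Dual ℝ E))) := by
      rw [← himg]
      rintro ⟨v, hv, hvw⟩
      exact hwn (φ.injective hvw ▸ hv)
    have hcvx : Convex ℝ (convexHull ℝ (⇑φ '' (F : Set (Module.Dual ℝ E)))) :=
      convex_convexHull ℝ _
    have hcpt : IsCompact (convexHull ℝ (⇑φ '' (F : Set (Module.Dual ℝ E)))) :=
      ((F.finite_toSet).image _).isCompact_convexHull (𝕜 := ℝ)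
    obtain ⟨f, c, hfc, hcw⟩ := geometric_hahn_banach_closed_point hcvx hcpt.isClosed hwnot
    set a0 : E := (Module.evalEquiv ℝ E).symm (f.toLinearMap.comp φ.toLinearMap) with ha0def
    have ha0 : ∀ v : Module.Dual ℝ E, v a0 = f (φ v) := by
      intro v
      exact Module.apply_evalEquiv_symm_apply (R := ℝ) (M := E) v
        (f.toLinearMap.comp φ.toLinearMap)
    set M : E → ℝ := fun x => F.sup' hFne (fun v => v x) with hM
    have hMle : ∀ (x : E), ∀ v ∈ F, v x ≤ M x := fun x v hv =>
      Finset.le_sup' (fun v : Module.Dual ℝ E => v x) hv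
    have hMa : M a0 < c := by
      rw [hM]
      rw [Finset.sup'_lt_iff]
      intro v hv
      rw [ha0 v]
      exact hfc (φ v) (subset_convexHull ℝ _ ⟨v, hv, rfl⟩)
    have hwa : c < w a0 := by
      rw [ha0 w]
      exact hcw
    have hga : 0 < N a0 - M a0 := by
      have := hw a0
      linarith
    set K : ℝ := ∑ i, N (b i) with hK
    have hK0 : 0 ≤ K := Finset.sum_nonneg fun i _ => hNnn _
    obtain ⟨m, hm⟩ := exists_nat_gt ((2 * K + 1) / (N a0 - M a0))
    have hm1 : 2 * K < (m : ℝ) * (N a0 - M a0) := by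
      rw [div_lt_iff₀ hga] at hm
      nlinarith
    have hNsum : ∀ (g : ι → E), N (∑ i, g i) ≤ ∑ i, N (g i) := by
      intro g
      have : ∀ t : Finset ι, N (∑ i ∈ t, g i) ≤ ∑ i ∈ t, N (g i) := by
        intro t
        induction t using Finset.cons_induction with
        | empty => simp [hN0]
        | cons j t hjt IH =>
            rw [Finset.sum_cons, Finset.sum_cons]
            calc N (g j + ∑ i ∈ t, g i) ≤ N (g j) + N (∑ i ∈ t, g i) := hadd _ _
              _ ≤ N (g j) + ∑ i ∈ t, N (g i) := by linarith
      exact this Finset.univ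
    set c0 : ι → ℝ := fun i => b.repr a0 i with hc0
    have ha0r : a0 = ∑ i, c0 i • b i := (b.sum_repr a0).symm
    set x₀ : E := ∑ i, (⌊(m : ℝ) * c0 i⌋ : ℝ) • b i with hx₀
    have hx₀Λ : x₀ ∈ Λ' := by
      refine Submodule.sum_mem _ fun i _ => ?_
      have e : (⌊(m : ℝ) * c0 i⌋ : ℝ) • b i = (⌊(m : ℝ) * c0 i⌋ : ℤ) • b i :=
        Int.cast_smul_eq_zsmul ℝ _ _
      rw [e]
      exact Submodule.smul_mem Λ' _ (Submodule.subset_span ⟨i, rfl⟩)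
    set d : E := (m : ℝ) • a0 - x₀ with hd
    have hdsum : d = ∑ i, ((m : ℝ) * c0 i - (⌊(m : ℝ) * c0 i⌋ : ℝ)) • b i := by
      rw [hd, hx₀]
      conv_lhs => rw [ha0r]
      rw [Finset.smul_sum, ← Finset.sum_sub_distrib]
      refine Finset.sum_congr rfl fun i _ => ?_
      rw [smul_smul, sub_smul]
    have hNd : N d ≤ K := by
      rw [hdsum]
      refine (hNsum _).trans ?_
      rw [hK]
      refine Finset.sum_le_sum fun i _ => ?_
      rw [hhom]
      have h1 : |(m : ℝ) * c0 i - (⌊(m : ℝ) * c0 i⌋ : ℝ)| ≤ 1 := by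
        rw [abs_le]
        constructor
        · linarith [Int.floor_le ((m : ℝ) * c0 i)]
        · linarith [Int.lt_floor_add_one ((m : ℝ) * c0 i)]
      nlinarith [hNnn (b i), abs_nonneg ((m : ℝ) * c0 i - (⌊(m : ℝ) * c0 i⌋ : ℝ))]
    have hNma : N ((m : ℝ) • a0) = (m : ℝ) * N a0 := hsmulN _ (by positivity) a0
    have hNx₀ : (m : ℝ) * N a0 - K ≤ N x₀ := by
      have h1 : N ((m : ℝ) • a0) ≤ N x₀ + N d := by
        have e : (m : ℝ) • a0 = x₀ + d := by rw [hd]; abel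
        rw [e]
        exact hadd _ _
      linarith [hNma]
    have hMx₀ : M x₀ ≤ (m : ℝ) * M a0 + K := by
      obtain ⟨v, hvF, hveq⟩ := Finset.exists_mem_eq_sup' hFne (fun v : Module.Dual ℝ E => v x₀)
      have hvL := (hFL v).mp hvF
      have h1 : v x₀ = (m : ℝ) * v a0 - v d := by
        have e : x₀ = (m : ℝ) • a0 - d := by rw [hd]; abel
        rw [e, map_sub, map_smul, smul_eq_mul]
      have h2 : -v d ≤ K := by
        have h3 := hvL.1 (-d)
        rw [map_neg, hNneg] at h3
        linarith [hNd]
      have h3 : v a0 ≤ M a0 := hMle a0 v hvF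
      have h4 : (m : ℝ) * v a0 ≤ (m : ℝ) * M a0 :=
        mul_le_mul_of_nonneg_left h3 (by positivity)
      calc M x₀ = v x₀ := hveq
        _ = (m : ℝ) * v a0 - v d := h1
        _ ≤ (m : ℝ) * M a0 + K := by linarith
    have hgap : M x₀ < N x₀ := by
      have e : (m : ℝ) * (N a0 - M a0) = (m : ℝ) * N a0 - (m : ℝ) * M a0 := by ring
      linarith
    obtain ⟨u, hu1, hu2, hu3⟩ := IntNormDual.exists_integral_support b N hadd hsmulN hintN x₀ hx₀Λ
    have huF : u ∈ F := (hFL u).mpr ⟨hu1, hu2⟩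
    have hfin := hMle x₀ u huF
    rw [hu3] at hfin
    linarith
end

section
/- Let u₁, …, u_k be linear functionals on a finite-dimensional real vector space E whose convex hull is the dual unit ball of a norm N (so N(a) = max_i ⟨u_i, a⟩ for all a). Then N takes integer values on a lattice Λ if and only if each u_i that is a vertex of the convex hull takes integer values on Λ — in particular, if every u_i is integer-valued on Λ, then N(Λ) ⊆ ℤ. -/
open Set

section Aux

variable {E : Type*} [AddCommGroup E] [Module ℝ E] [FiniteDimensional ℝ E]
  {k : ℕ} {u : Fin (k + 1) → Module.Dual ℝ E}

/-- An extreme point of the convex hull of the `u j` admits an exposing vector. -/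
lemma aux_exists_exposing_vec (i : Fin (k + 1))
    (hi : u i ∈ Set.extremePoints ℝ (convexHull ℝ (Set.range u))) :
    ∃ a : E, ∀ j, u j ≠ u i → u j a < u i a := by
  classical
  let e : Module.Dual ℝ E ≃ₗ[ℝ] (Fin (Module.finrank ℝ (Module.Dual ℝ E)) → ℝ) :=
    (Module.finBasis ℝ (Module.Dual ℝ E)).equivFun
  have himage : ∀ s : Set (Module.Dual ℝ E),
      ⇑e '' (convexHull ℝ s) = convexHull ℝ (⇑e '' s) := fun s => by
    simpa using e.toLinearMap.image_convexHull s
  have hnot : u i ∉ convexHull ℝ (Set.range u \ {u i}) := by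
    have h1 := (convex_convexHull ℝ
      (Set.range u)).mem_extremePoints_iff_mem_diff_convexHull_diff.mp hi
    intro hmem
    exact h1.2 (convexHull_mono (diff_subset_diff_left (subset_convexHull ℝ _)) hmem)
  have hnot' : e (u i) ∉ convexHull ℝ (e '' (Set.range u \ {u i})) := by
    rw [← himage]
    rintro ⟨x, hx, hxe⟩
    exact hnot (e.injective hxe ▸ hx)
  have hfin : (e '' (Set.range u \ {u i})).Finite :=
    ((Set.finite_range u).diff).image _
  obtain ⟨f, c, hfc, hci⟩ := geometric_hahn_banach_closed_point
    (convex_convexHull ℝ _) (hfin.isCompact_convexHull (𝕜 := ℝ)).isClosed hnot'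
  let φ : Module.Dual ℝ (Module.Dual ℝ E)  := f.toLinearMap ∘ₗ e.toLinearMap
  refine ⟨(Module.evalEquiv ℝ E).symm φ, fun j hj => ?_⟩
  have hja : u j ((Module.evalEquiv ℝ E).symm φ) = f (e (u j)) :=
    Module.apply_evalEquiv_symm_apply ℝ E (u j) φ
  have hia : u i ((Module.evalEquiv ℝ E).symm φ) = f (e (u i)) :=
    Module.apply_evalEquiv_symm_apply ℝ E (u i) φ
  rw [hja, hia]
  have hmem : e (u j) ∈ convexHull ℝ (e '' (Set.range u \ {u i})) :=
    subset_convexHull ℝ _ ⟨u j, ⟨Set.mem_range_self j, hj⟩, rfl⟩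
  exact (hfc _ hmem).trans hci

/-- The max of the `u j` at a point is attained at some extreme point of the hull. -/
lemma aux_exists_extreme_max (a : E) :
    ∃ i, u i ∈ Set.extremePoints ℝ (convexHull ℝ (Set.range u)) ∧ ∀ j, u j a ≤ u i a := by
  classical
  let e : Module.Dual ℝ E ≃ₗ[ℝ] (Fin (Module.finrank ℝ (Module.Dual ℝ E)) → ℝ) :=
    (Module.finBasis ℝ (Module.Dual ℝ E)).equivFun
  have himage : ∀ s : Set (Module.Dual ℝ E),
      ⇑e '' (convexHull ℝ s) = convexHull ℝ (⇑e '' s) := fun s => by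
    simpa using e.toLinearMap.image_convexHull s
  set Q := convexHull ℝ (e '' Set.range u) with hQ
  have hQcomp : IsCompact Q := ((Set.finite_range u).image _).isCompact_convexHull (𝕜 := ℝ)
  have hQne : Q.Nonempty :=
    (Set.Nonempty.image _ (Set.range_nonempty u)).convexHull
  let ℓ₀ : Module.Dual ℝ (Module.Dual ℝ E)  := Module.Dual.eval ℝ E a
  let ℓlin : (Fin (Module.finrank ℝ (Module.Dual ℝ E)) → ℝ) →ₗ[ℝ] ℝ := ℓ₀ ∘ₗ e.symm.toLinearMap
  let ℓ : (Fin (Module.finrank ℝ (Module.Dual ℝ E)) → ℝ) →L[ℝ] ℝ := ⟨ℓlin, ℓlin.continuous_of_finiteDimensional⟩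
  have hℓval : ∀ j, ℓ (e (u j)) = u j a := by
    intro j
    show ℓ₀ (e.symm (e (u j))) = u j a
    rw [e.symm_apply_apply]
    rfl
  obtain ⟨w₀, hw₀Q, hw₀max⟩ := hQcomp.exists_isMaxOn hQne ℓ.continuous.continuousOn
  set F := ℓ.toExposed Q with hF
  have hexp : IsExposed ℝ Q F := ContinuousLinearMap.toExposed.isExposed
  have hFne : F.Nonempty := ⟨w₀, hw₀Q, fun y hy => hw₀max hy⟩
  have hFcomp : IsCompact F := hexp.isCompact hQcomp
  obtain ⟨x, hx⟩ := hFcomp.extremePoints_nonempty hFne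
  have hxQ : x ∈ Q.extremePoints ℝ := hexp.isExtreme.extremePoints_subset_extremePoints hx
  have hxmem : x ∈ e '' Set.range u := extremePoints_convexHull_subset hxQ
  obtain ⟨w, ⟨i, rfl⟩, rfl⟩ := hxmem
  refine ⟨i, ?_, ?_⟩
  · have himg : e '' Set.extremePoints ℝ (convexHull ℝ (Set.range u)) = Q.extremePoints ℝ := by
      rw [image_extremePoints e, hQ, ← himage]
    have : e (u i) ∈ e '' Set.extremePoints ℝ (convexHull ℝ (Set.range u)) := himg ▸ hxQ
    obtain ⟨w, hw, hwe⟩ := this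
    rwa [← e.injective hwe]
  · intro j
    have hjQ : e (u j) ∈ Q := subset_convexHull ℝ _ ⟨u j, Set.mem_range_self j, rfl⟩
    have := hx.1.2 (e (u j)) hjQ
    rwa [hℓval j, hℓval i] at this

/-- Rounding a separating vector to the lattice, uniformly good for the offset `x`. -/
lemma aux_exists_lattice_sep {ι : Type*} [Fintype ι] (b : Module.Basis ι ℝ E)
    (i : Fin (k + 1)) (a₀ : E) (hsep : ∀ j, u j ≠ u i → u j a₀ < u i a₀) (x : E) :
    ∃ y : E, y ∈ (Submodule.span ℤ (Set.range b) : Submodule ℤ E) ∧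
      (∀ j, u j y ≤ u i y) ∧ (∀ j, u j (y + x) ≤ u i (y + x)) := by
  classical
  set c : ι → ℝ := fun l => b.repr a₀ l with hc
  set C : Fin (k + 1) → ℝ := fun j => ∑ l, (1 / 2) * |u j (b l)| with hC
  set D : Fin (k + 1) → ℝ := fun j => C i + C j + |u i x - u j x| with hD
  set R : ℝ := Finset.univ.sup' Finset.univ_nonempty
    (fun j => if u j ≠ u i then D j / (u i a₀ - u j a₀) else 0) with hR
  obtain ⟨m, hm⟩ := exists_nat_gt R
  set y : E := ∑ l, (round ((m : ℝ) * c l) : ℤ) • b l with hy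
  have hymem : y ∈ (Submodule.span ℤ (Set.range b) : Submodule ℤ E) := by
    refine Submodule.sum_mem _ fun l _ => Submodule.smul_mem _ _ ?_
    exact Submodule.subset_span (Set.mem_range_self l)
  have hval : ∀ j, u j y = ∑ l, ((round ((m : ℝ) * c l) : ℤ) : ℝ) * u j (b l) := by
    intro j
    rw [hy, map_sum]
    exact Finset.sum_congr rfl fun l _ => by rw [map_zsmul, zsmul_eq_mul]
  have ha₀ : ∀ j, u j a₀ = ∑ l, c l * u j (b l) := by
    intro j
    conv_lhs => rw [← b.sum_repr a₀]
    rw [map_sum]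
    exact Finset.sum_congr rfl fun l _ => by rw [map_smul, smul_eq_mul]
  have hbound : ∀ j, |u j y - (m : ℝ) * u j a₀| ≤ C j := by
    intro j
    rw [hval, ha₀, Finset.mul_sum, ← Finset.sum_sub_distrib]
    refine (Finset.abs_sum_le_sum_abs _ _).trans (Finset.sum_le_sum fun l _ => ?_)
    have h1 : ((round ((m : ℝ) * c l) : ℤ) : ℝ) * u j (b l) - (m : ℝ) * (c l * u j (b l))
        = (((round ((m : ℝ) * c l) : ℤ) : ℝ) - (m : ℝ) * c l) * u j (b l) := by ring
    rw [h1, abs_mul]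
    have h2 : |((round ((m : ℝ) * c l) : ℤ) : ℝ) - (m : ℝ) * c l| ≤ 1 / 2 := by
      rw [abs_sub_comm]; exact abs_sub_round _
    exact mul_le_mul_of_nonneg_right h2 (abs_nonneg _)
  have key : ∀ j, u j ≠ u i → u j y < u i y ∧ u j y + u j x < u i y + u i x := by
    intro j hj
    have hδ : 0 < u i a₀ - u j a₀ := sub_pos.mpr (hsep j hj)
    have hRle : D j / (u i a₀ - u j a₀) ≤ R := by
      have := Finset.le_sup' (f := fun j => if u j ≠ u i then D j / (u i a₀ - u j a₀) else 0)
        (Finset.mem_univ j)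
      rwa [if_pos hj] at this
    have hmD : D j < (m : ℝ) * (u i a₀ - u j a₀) := by
      have : D j / (u i a₀ - u j a₀) < (m : ℝ) := lt_of_le_of_lt hRle hm
      exact (div_lt_iff₀ hδ).mp this
    have h1 := hbound i
    have h2 := hbound j
    rw [abs_le] at h1 h2
    have h3 : |u i x - u j x| ≥ u j x - u i x := by
      have := neg_abs_le (u i x - u j x)
      linarith
    have h4 : (0 : ℝ) ≤ |u i x - u j x| := abs_nonneg _
    have hmD' : C i + C j + |u i x - u j x| < (m : ℝ) * u i a₀ - (m : ℝ) * u j a₀ := by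
      have hms := mul_sub (m : ℝ) (u i a₀) (u j a₀)
      simp only [hD] at hmD
      linarith
    exact ⟨by linarith [h1.1, h1.2, h2.1, h2.2],
      by linarith [h1.1, h1.2, h2.1, h2.2]⟩
  refine ⟨y, hymem, fun j => ?_, fun j => ?_⟩
  · by_cases hj : u j = u i
    · rw [hj]
    · exact (key j hj).1.le
  · by_cases hj : u j = u i
    · rw [hj]
    · rw [map_add, map_add]
      exact (key j hj).2.le

end Aux

/-- For a norm given as a max of finitely many linear functionals, the norm takes
integer values on a full-rank lattice iff every functional which is a vertex
(extreme point) of the dual unit ball (the convex hull of the functionals) is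
integer-valued on the lattice; in particular, if all functionals are
integer-valued, the norm is. -/
theorem max_functional_norm_integer_iff_vertices_integer
    {E : Type*} [AddCommGroup E] [Module ℝ E] [FiniteDimensional ℝ E]
    {ι : Type*} [Fintype ι] (b : Module.Basis ι ℝ E)
    (Λ : Set E) (hΛ : Λ = (Submodule.span ℤ (Set.range b) : Submodule ℤ E))
    {k : ℕ} (u : Fin (k + 1) → Module.Dual ℝ E)
    (N : E → ℝ)
    (hN : ∀ a : E, N a = Finset.univ.sup' Finset.univ_nonempty (fun i => u i a))
    (hnorm : (∀ a : E, a ≠ 0 → 0 < N a) ∧ ∀ a : E, N (-a) = N a) :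
    ((∀ a ∈ Λ, ∃ z : ℤ, N a = z) ↔
      (∀ i, u i ∈ Set.extremePoints ℝ (convexHull ℝ (Set.range u)) →
        ∀ a ∈ Λ, ∃ z : ℤ, u i a = z)) ∧
    ((∀ i, ∀ a ∈ Λ, ∃ z : ℤ, u i a = z) → ∀ a ∈ Λ, ∃ z : ℤ, N a = z) := by
  subst hΛ
  have hNmax : ∀ (a : E) (i : Fin (k + 1)), (∀ j, u j a ≤ u i a) → N a = u i a := by
    intro a i hmax
    rw [hN]
    exact le_antisymm (Finset.sup'_le _ _ fun j _ => hmax j)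
      (Finset.le_sup' (fun j => u j a) (Finset.mem_univ i))
  have main : (∀ a ∈ (Submodule.span ℤ (Set.range b) : Submodule ℤ E).carrier, ∃ z : ℤ, N a = z) ↔
      (∀ i, u i ∈ Set.extremePoints ℝ (convexHull ℝ (Set.range u)) →
        ∀ a ∈ (Submodule.span ℤ (Set.range b) : Submodule ℤ E).carrier, ∃ z : ℤ, u i a = z) := by
    constructor
    · intro hNint i hi x hx
      obtain ⟨a₀, hsep⟩ := aux_exists_exposing_vec i hi
      obtain ⟨y, hy, h1, h2⟩ := aux_exists_lattice_sep b i a₀ hsep x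
      have hNy : N y = u i y := hNmax y i h1
      have hNyx : N (y + x) = u i (y + x) := hNmax (y + x) i h2
      obtain ⟨z₁, hz₁⟩ := hNint y hy
      obtain ⟨z₂, hz₂⟩ := hNint (y + x) (Submodule.add_mem _ hy hx)
      refine ⟨z₂ - z₁, ?_⟩
      have hadd : u i (y + x) = u i y + u i x := map_add _ _ _
      push_cast
      rw [hNy] at hz₁
      rw [hNyx, hadd] at hz₂
      linarith
    · intro hext a ha
      obtain ⟨i, hiext, himax⟩ := aux_exists_extreme_max (u := u) a
      obtain ⟨z, hz⟩ := hext i hiext a ha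
      exact ⟨z, (hNmax a i himax).trans hz⟩
  exact ⟨main, fun h a ha => main.mpr (fun i _ => h i) a ha⟩
end

section
/- If every vertex u_i of the dual unit ball of an integer norm N on ℝⁿ (relative to ℤⁿ) has all coordinates even, then N(a) is even for every a ∈ ℤⁿ; conversely, if N takes only even values on ℤⁿ and N(a) = max_i ⟨u_i, a⟩ with u_i ∈ ℤⁿ vertices of the dual ball, then each u_i ∈ 2ℤⁿ. -/
private lemma sup'_eq_of_lt {ι α : Type*} [LinearOrder α] {s : Finset ι} (hs : s.Nonempty)
    (f : ι → α) {i : ι} (hi : i ∈ s) (h : ∀ j ∈ s, j ≠ i → f j < f i) :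
    s.sup' hs f = f i := by
  refine le_antisymm (Finset.sup'_le _ _ fun j hj => ?_) (Finset.le_sup' f hi)
  rcases eq_or_ne j i with rfl | h'
  · exact le_rfl
  · exact (h j hj h').le

/-- For a norm `N(a) = maxᵢ ⟨uᵢ, a⟩` on `ℝⁿ` whose defining integer vectors
`uᵢ` are exactly the vertices of the dual unit ball (each is extreme), all
coordinates of all `uᵢ` are even iff `N` takes only even values on `ℤⁿ`. -/
theorem even_vertices_iff_even_norm
    {n k : ℕ} (u : Fin (k + 1) → Fin n → ℤ)
    (N : (Fin n → ℝ) → ℝ)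
    (hN : ∀ a : Fin n → ℝ,
      N a = Finset.univ.sup' Finset.univ_nonempty (fun i => ∑ c, (u i c : ℝ) * a c))
    (hnorm : ∀ a : Fin n → ℝ, a ≠ 0 → 0 < N a)
    (hext : ∀ i : Fin (k + 1), ∃ a : Fin n → ℝ,
      ∀ j : Fin (k + 1), j ≠ i → ∑ c, (u j c : ℝ) * a c < ∑ c, (u i c : ℝ) * a c) :
    (∀ i : Fin (k + 1), ∀ c : Fin n, (2 : ℤ) ∣ u i c) ↔
      (∀ a : Fin n → ℤ,
        (2 : ℤ) ∣ Finset.univ.sup' Finset.univ_nonempty (fun i => ∑ c, u i c * a c)) := by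
  constructor
  · intro h a
    obtain ⟨i, hi, hsup⟩ := Finset.exists_mem_eq_sup' Finset.univ_nonempty
      (fun i => ∑ c, u i c * a c)
    rw [hsup]
    exact Finset.dvd_sum fun c _ => Dvd.dvd.mul_right (h i c) _
  · intro heven i c
    obtain ⟨a, ha⟩ := hext i
    -- choose T large
    set B : Fin (k + 1) → ℝ := fun j => if j = i then 0 else
      (∑ d, |((u i d - u j d : ℤ) : ℝ)|) / (2 * ((∑ d, (u i d : ℝ) * a d) - ∑ d, (u j d : ℝ) * a d)) with hB
    obtain ⟨T, hT⟩ := exists_nat_gt (Finset.univ.sup' Finset.univ_nonempty B)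
    set a0 : Fin n → ℤ := fun d => round ((T : ℝ) * a d) with ha0
    have hdom : ∀ j, j ≠ i → (∑ d, u j d * a0 d) < ∑ d, u i d * a0 d := by
      intro j hj
      have hδ : (0 : ℝ) < (∑ d, (u i d : ℝ) * a d) - ∑ d, (u j d : ℝ) * a d :=
        sub_pos.mpr (ha j hj)
      have hTj : B j < T := lt_of_le_of_lt (Finset.le_sup' B (Finset.mem_univ j)) hT
      rw [hB] at hTj
      simp only [if_neg hj] at hTj
      have hTj' : (∑ d, |((u i d - u j d : ℤ) : ℝ)|) / 2 <
          (T : ℝ) * ((∑ d, (u i d : ℝ) * a d) - ∑ d, (u j d : ℝ) * a d) := by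
        rw [div_lt_iff₀ (by positivity)] at hTj
        nlinarith
      have key : (0 : ℝ) < ((∑ d, u i d * a0 d) - ∑ d, u j d * a0 d : ℤ) := by
        push_cast
        have expand : (∑ d, (u i d : ℝ) * a0 d) - ∑ d, (u j d : ℝ) * a0 d =
            (T : ℝ) * ((∑ d, (u i d : ℝ) * a d) - ∑ d, (u j d : ℝ) * a d)
              + ∑ d, ((u i d : ℝ) - u j d) * ((a0 d : ℝ) - (T : ℝ) * a d) := by
          simp only [mul_sub, Finset.mul_sum, ← Finset.sum_sub_distrib,
            ← Finset.sum_add_distrib]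
          apply Finset.sum_congr rfl
          intro d _
          ring
        rw [expand]
        have hbound : |∑ d, ((u i d : ℝ) - u j d) * ((a0 d : ℝ) - (T : ℝ) * a d)| ≤
            (∑ d, |((u i d - u j d : ℤ) : ℝ)|) / 2 := by
          calc |∑ d, ((u i d : ℝ) - u j d) * ((a0 d : ℝ) - (T : ℝ) * a d)|
              ≤ ∑ d, |((u i d : ℝ) - u j d) * ((a0 d : ℝ) - (T : ℝ) * a d)| :=
                Finset.abs_sum_le_sum_abs _ _
            _ ≤ ∑ d, |((u i d - u j d : ℤ) : ℝ)| * (1 / 2) := by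
                apply Finset.sum_le_sum
                intro d _
                rw [abs_mul]
                push_cast
                refine mul_le_mul_of_nonneg_left ?_ (abs_nonneg _)
                rw [abs_sub_comm]
                exact abs_sub_round ((T : ℝ) * a d)
            _ = (∑ d, |((u i d - u j d : ℤ) : ℝ)|) / 2 := by
                rw [← Finset.sum_mul]; ring
        have := (abs_le.mp hbound).1
        linarith
      have : (0 : ℤ) < (∑ d, u i d * a0 d) - ∑ d, u j d * a0 d := by exact_mod_cast key
      linarith
    -- even multiplier m
    set m : ℤ := 2 * (1 + Finset.univ.sup' Finset.univ_nonempty (fun j => |u j c - u i c|)) with hm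
    have hsup_nonneg : 0 ≤ Finset.univ.sup' Finset.univ_nonempty (fun j => |u j c - u i c|) :=
      le_trans (abs_nonneg _) (Finset.le_sup' (fun j => |u j c - u i c|) (Finset.mem_univ i))
    have hm_gt : ∀ j, u j c - u i c < m := by
      intro j
      have h1 : u j c - u i c ≤ |u j c - u i c| := le_abs_self _
      have h2 : |u j c - u i c| ≤ Finset.univ.sup' Finset.univ_nonempty (fun j => |u j c - u i c|) :=
        Finset.le_sup' (fun j => |u j c - u i c|) (Finset.mem_univ j)
      omega
    set a1 : Fin n → ℤ := fun d => m * a0 d + if d = c then 1 else 0 with ha1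
    have hval : ∀ j, (∑ d, u j d * a1 d) = m * (∑ d, u j d * a0 d) + u j c := by
      intro j
      rw [ha1]
      have hterm : ∀ d, u j d * (m * a0 d + if d = c then 1 else 0)
          = m * (u j d * a0 d) + (if d = c then u j d else 0) := by
        intro d; split <;> ring
      simp only [hterm]
      rw [Finset.sum_add_distrib, ← Finset.mul_sum,
        Finset.sum_ite_eq' Finset.univ c (fun d => u j d)]
      simp
    have hdom1 : ∀ j, j ≠ i → (∑ d, u j d * a1 d) < ∑ d, u i d * a1 d := by
      intro j hj
      rw [hval j, hval i]
      have h1 : (∑ d, u j d * a0 d) + 1 ≤ ∑ d, u i d * a0 d := hdom j hj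
      have h2 : u j c - u i c < m := hm_gt j
      have hm_nonneg : 0 ≤ m := by omega
      nlinarith
    have := heven a1
    rw [sup'_eq_of_lt Finset.univ_nonempty _ (Finset.mem_univ i)
      (fun j _ hj => hdom1 j hj)] at this
    rw [hval i] at this
    have hm2 : (2 : ℤ) ∣ m * (∑ d, u i d * a0 d) :=
      Dvd.dvd.mul_right ⟨_, hm⟩ _
    omega
end
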